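/- arXiv:2008.04708 — 3 statements merged into one kernel-verified Lean document; each statement's English description precedes it below -/
import Mathlib

section
/- Consistency of group-specific means (Lemma 1): Under Assumption 1 and along the asymptotic sequence, there exists a (possibly random) permutation π of {1,…,G} such that for every ε > 0, P( max_{g ∈ {1,…,G}} |μ̂_{π(g)} − μ⁰_g| > ε ) → 0 as n → ∞. -/
open MeasureTheory ProbabilityTheory Filter Finset

lemma aux_sq_integral_abs_le {α : Type*} [MeasurableSpace α] {μ : Measure α}
    [IsProbabilityMeasure μ] {f : α → ℝ} (h1 : Integrable f μ)
    (h2 : Integrable (fun ω => f ω ^ 2) μ) :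
    (∫ ω, |f ω| ∂μ) ^ 2 ≤ ∫ ω, f ω ^ 2 ∂μ := by
  set J := ∫ ω, |f ω| ∂μ with hJ
  have habs : Integrable (fun ω => |f ω|) μ := h1.abs
  have hcm : Integrable (fun ω => (2*J) * |f ω|) μ := habs.const_mul _
  have hsub : Integrable (fun ω => f ω ^ 2 - (2*J) * |f ω|) μ := h2.sub hcm
  have key : (0:ℝ) ≤ ∫ ω, (f ω ^ 2 - (2*J) * |f ω| + J^2) ∂μ := by
    refine integral_nonneg fun ω => ?_
    show (0:ℝ) ≤ _
    nlinarith [sq_nonneg (|f ω| - J), sq_abs (f ω)]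
  rw [integral_add hsub (integrable_const _),
    integral_sub h2 hcm, integral_const_mul, integral_const] at key
  simp only [probReal_univ, measure_univ, ENNReal.toReal_one, smul_eq_mul, one_mul] at key
  nlinarith [key]

lemma aux_integral_sq_sum {α : Type*} [MeasurableSpace α] {μ : Measure α}
    [IsProbabilityMeasure μ] (Tn : ℕ) (v : ℕ → α → ℝ) (hmeas : ∀ t, Measurable (v t))
    (hindep : iIndepFun v μ)
    (hmean : ∀ t, ∫ ω, v t ω ∂μ = 0) (hvar : ∀ t, ∫ ω, (v t ω) ^ 2 ∂μ = 1) :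
    ∫ ω, (∑ t ∈ Finset.range Tn, v t ω) ^ 2 ∂μ = Tn := by
  have hv2 : ∀ t, Integrable (fun ω => v t ω ^ 2) μ := by
    intro t
    by_contra h
    have hv := hvar t
    rw [integral_undef h] at hv
    exact zero_ne_one hv
  have hvL2 : ∀ t, MemLp (v t) 2 μ := fun t =>
    (memLp_two_iff_integrable_sq (hmeas t).aestronglyMeasurable).2 (hv2 t)
  have hv1 : ∀ t, Integrable (v t) μ := fun t => (hvL2 t).integrable one_le_two
  have hprod_int : ∀ t s, Integrable (fun ω => v t ω * v s ω) μ := by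
    intro t s
    rcases eq_or_ne t s with rfl | hts
    · simpa [sq] using hv2 t
    · exact (hindep.indepFun hts).integrable_mul (hv1 t) (hv1 s)
  have hprod_val : ∀ t s, t ≠ s → ∫ ω, v t ω * v s ω ∂μ = 0 := by
    intro t s hts
    have := (hindep.indepFun hts).integral_fun_mul_eq_mul_integral (hv1 t).1 (hv1 s).1
    simpa [hmean t, hmean s] using this
  have hexp : ∀ ω, (∑ t ∈ Finset.range Tn, v t ω) ^ 2
      = ∑ t ∈ Finset.range Tn, ∑ s ∈ Finset.range Tn, v t ω * v s ω := by
    intro ω; rw [sq, Finset.sum_mul_sum]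
  rw [show (fun ω => (∑ t ∈ Finset.range Tn, v t ω) ^ 2)
      = fun ω => ∑ t ∈ Finset.range Tn, ∑ s ∈ Finset.range Tn, v t ω * v s ω from funext hexp]
  rw [integral_finset_sum _ (fun t _ => integrable_finset_sum _ (fun s _ => hprod_int t s))]
  have : ∀ t ∈ Finset.range Tn,
      (∫ ω, ∑ s ∈ Finset.range Tn, v t ω * v s ω ∂μ) = 1 := by
    intro t ht
    rw [integral_finset_sum _ (fun s _ => hprod_int t s)]
    rw [Finset.sum_eq_single_of_mem t ht (fun s _ hst => hprod_val t s (Ne.symm hst))]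
    simpa [← sq] using hvar t
  rw [Finset.sum_congr rfl this]
  simp

set_option maxHeartbeats 1000000

/-- **Lemma 1 (Consistency of group-specific means).**
Panel model with latent group structure: for each `n` there are `N n` units and `T n`
periods, outcomes `y n i t = μ0 (g0 n i) + σ n i * v n i t`.  Under Assumption 1 and the
asymptotic sequence `N, T → ∞`, `(log T)·√(log N)/√T → 0`, there exists a (possibly
random) permutation `π` of the `G` groups such that for every `ε > 0`,
`P (max_g |μ̂_{π g} − μ0 g| > ε) → 0`. -/
theorem mean_consistency
    {G : ℕ} (hG : 0 < G)
    (Ω : ℕ → Type) (mΩ : ∀ n, MeasurableSpace (Ω n))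
    (P : ∀ n, Measure (Ω n)) (hP : ∀ n, IsProbabilityMeasure (P n))
    (N T : ℕ → ℕ)
    (hN : Tendsto (fun n => (N n : ℝ)) atTop atTop)
    (hT : Tendsto (fun n => (T n : ℝ)) atTop atTop)
    (hrate : Tendsto
      (fun n => Real.log (T n) * Real.sqrt (Real.log (N n)) / Real.sqrt (T n))
      atTop (nhds 0))
    -- data generating process
    (v : ∀ n, ℕ → ℕ → Ω n → ℝ) (hvmeas : ∀ n i t, Measurable (v n i t))
    (σ : ℕ → ℕ → ℝ) (hσ : ∀ n i, 0 ≤ σ n i)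
    (g0 : ℕ → ℕ → Fin G) (μ0 : Fin G → ℝ)
    (y : ∀ n, ℕ → ℕ → Ω n → ℝ)
    (hy : ∀ n i t ω, y n i t ω = μ0 (g0 n i) + σ n i * v n i t ω)
    -- Assumption 1(i): independence over time, mean zero, unit variance
    (hindep : ∀ n i, iIndepFun (fun t => v n i t) (P n))
    (hmean : ∀ n i t, ∫ ω, v n i t ω ∂(P n) = 0)
    (hvar : ∀ n i t, ∫ ω, (v n i t ω) ^ 2 ∂(P n) = 1)
    -- Assumption 1(ii): average error variance is o(T)
    (hA1ii : Tendsto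
      (fun n => ((N n : ℝ)⁻¹ * ∑ i ∈ Finset.range (N n), (σ n i) ^ 2) / (T n : ℝ))
      atTop (nhds 0))
    -- Assumption 1(iii): bounded parameter set containing the truth
    (M : Set (Fin G → ℝ)) (hMbdd : Bornology.IsBounded M) (hμ0M : μ0 ∈ M)
    -- Assumption 1(iv): group separation
    (MG : ℝ) (hMG : 0 < MG)
    (hsep : ∀ g h : Fin G, g ≠ h → MG < |μ0 g - μ0 h|)
    -- Assumption 1(v): non-negligible groups
    (qmin : ℝ) (hqmin : 0 < qmin)
    (hgroup : ∀ n (g : Fin G),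
      qmin * (N n : ℝ) ≤ ((Finset.range (N n)).filter (fun i => g0 n i = g)).card)
    -- the kmeans estimator: joint minimizer of the objective
    (μhat : ∀ n, Ω n → Fin G → ℝ) (ghat : ∀ n, Ω n → ℕ → Fin G)
    (hμhatM : ∀ n ω, μhat n ω ∈ M)
    (hmin : ∀ n ω (g : ℕ → Fin G) (μ : Fin G → ℝ), μ ∈ M →
      ((N n : ℝ) * (T n : ℝ))⁻¹ * ∑ i ∈ Finset.range (N n), ∑ t ∈ Finset.range (T n),
          (y n i t ω - μhat n ω (ghat n ω i)) ^ 2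
        ≤ ((N n : ℝ) * (T n : ℝ))⁻¹ * ∑ i ∈ Finset.range (N n), ∑ t ∈ Finset.range (T n),
          (y n i t ω - μ (g i)) ^ 2) :
    ∃ π : (n : ℕ) → Ω n → Equiv.Perm (Fin G),
      ∀ ε : ℝ, 0 < ε →
        Tendsto (fun n => P n {ω | ε < ⨆ g : Fin G, |μhat n ω (π n ω g) - μ0 g|})
          atTop (nhds 0) := by
  classical
  have hGne : Nonempty (Fin G) := ⟨⟨0, hG⟩⟩
  obtain ⟨R, hR⟩ := isBounded_iff_forall_norm_le.1 hMbdd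
  set C : ℝ := 2 * |R| + 1 with hCdef
  have hCpos : 0 < C := by positivity
  have hDbd : ∀ n ω (a b : Fin G), |μ0 a - μhat n ω b| ≤ C := by
    intro n ω a b
    have h1 : |μ0 a| ≤ R := by
      have := (norm_le_pi_norm μ0 a).trans (hR μ0 hμ0M)
      simpa using this
    have h2 : |μhat n ω b| ≤ R := by
      have := (norm_le_pi_norm (μhat n ω) b).trans (hR _ (hμhatM n ω))
      simpa using this
    have h3 : |μ0 a - μhat n ω b| ≤ |μ0 a| + |μhat n ω b| := by
      calc |μ0 a - μhat n ω b| ≤ |μ0 a - 0| + |0 - μhat n ω b| := abs_sub_le _ _ _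
      _ = |μ0 a| + |μhat n ω b| := by simp
    have hRabs : R ≤ |R| := le_abs_self R
    rw [hCdef]; linarith
  have hargmin : ∀ n (ω : Ω n) (g : Fin G), ∃ h : Fin G, ∀ h' : Fin G,
      |μhat n ω h - μ0 g| ≤ |μhat n ω h' - μ0 g| := by
    intro n ω g
    obtain ⟨b, _, hb⟩ := Finset.exists_min_image Finset.univ
      (fun h => |μhat n ω h - μ0 g|) ⟨Classical.arbitrary _, Finset.mem_univ _⟩
    exact ⟨b, fun h' => hb h' (Finset.mem_univ _)⟩
  choose F hF using hargmin
  -- partial sums and the dominating statistic Z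
  set S : ∀ n, ℕ → Ω n → ℝ := fun n i ω => ∑ t ∈ Finset.range (T n), v n i t ω with hSdef
  set Z : ∀ n, Ω n → ℝ := fun n ω =>
    ((N n : ℝ) * (T n : ℝ))⁻¹ * ∑ i ∈ Finset.range (N n), σ n i * |S n i ω| with hZdef
  have hv2 : ∀ n i t, Integrable (fun ω => (v n i t ω) ^ 2) (P n) := by
    intro n i t
    by_contra h
    have hv := hvar n i t
    rw [integral_undef h] at hv
    exact zero_ne_one hv
  have hvL2 : ∀ n i t, MemLp (v n i t) 2 (P n) := fun n i t =>
    (memLp_two_iff_integrable_sq (hvmeas n i t).aestronglyMeasurable).2 (hv2 n i t)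
  have hSL2 : ∀ n i, MemLp (S n i) 2 (P n) := by
    intro n i
    rw [hSdef]
    exact memLp_finsetSum (Finset.range (T n)) (fun t _ => hvL2 n i t)
  have hS1 : ∀ n i, Integrable (S n i) (P n) := by
    intro n i
    haveI := hP n
    exact (hSL2 n i).integrable one_le_two
  have hS2 : ∀ n i, Integrable (fun ω => (S n i ω) ^ 2) (P n) := fun n i =>
    (memLp_two_iff_integrable_sq (hSL2 n i).aestronglyMeasurable).1 (hSL2 n i)
  have hES2 : ∀ n i, ∫ ω, (S n i ω) ^ 2 ∂(P n) = T n := by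
    intro n i
    haveI := hP n
    rw [hSdef]
    exact aux_integral_sq_sum (T n) (fun t => v n i t) (hvmeas n i) (hindep n i)
      (hmean n i) (hvar n i)
  have hEabsS : ∀ n i, ∫ ω, |S n i ω| ∂(P n) ≤ Real.sqrt (T n) := by
    intro n i
    haveI := hP n
    have h := aux_sq_integral_abs_le (hS1 n i) (hS2 n i)
    rw [hES2 n i] at h
    have h0 : 0 ≤ ∫ ω, |S n i ω| ∂(P n) := integral_nonneg fun ω => abs_nonneg _
    exact (Real.le_sqrt h0 (Nat.cast_nonneg _)).2 h
  have hZnn : ∀ n ω, 0 ≤ Z n ω := by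
    intro n ω
    rw [hZdef]
    exact mul_nonneg (inv_nonneg.2 (by positivity))
      (Finset.sum_nonneg fun i _ => mul_nonneg (hσ n i) (abs_nonneg _))
  have hZint : ∀ n, Integrable (Z n) (P n) := by
    intro n
    rw [hZdef]
    exact (integrable_finset_sum _ (fun i _ => ((hS1 n i).abs.const_mul (σ n i)))).const_mul _
  have hEZ : ∀ n, (0:ℝ) < N n → (0:ℝ) < T n →
      ∫ ω, Z n ω ∂(P n) ≤
        Real.sqrt (((N n : ℝ)⁻¹ * ∑ i ∈ Finset.range (N n), (σ n i) ^ 2) / (T n : ℝ)) := by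
    intro n hNpos hTpos
    haveI := hP n
    have hint : ∀ i ∈ Finset.range (N n),
        Integrable (fun ω => σ n i * |S n i ω|) (P n) := fun i _ =>
      (hS1 n i).abs.const_mul (σ n i)
    have hcalc : ∫ ω, Z n ω ∂(P n)
        = ((N n : ℝ) * (T n : ℝ))⁻¹ *
          ∑ i ∈ Finset.range (N n), ∫ ω, σ n i * |S n i ω| ∂(P n) := by
      rw [hZdef]
      rw [integral_const_mul, integral_finset_sum _ hint]
    rw [hcalc]
    have hstep : ∑ i ∈ Finset.range (N n), (∫ ω, σ n i * |S n i ω| ∂(P n))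
        ≤ (∑ i ∈ Finset.range (N n), σ n i) * Real.sqrt (T n) := by
      rw [Finset.sum_mul]
      refine Finset.sum_le_sum fun i _ => ?_
      rw [integral_const_mul]
      exact mul_le_mul_of_nonneg_left (hEabsS n i) (hσ n i)
    have h1 : ((N n : ℝ) * (T n : ℝ))⁻¹ *
          (∑ i ∈ Finset.range (N n), ∫ ω, σ n i * |S n i ω| ∂(P n))
        ≤ ((N n : ℝ) * (T n : ℝ))⁻¹ *
          ((∑ i ∈ Finset.range (N n), σ n i) * Real.sqrt (T n)) :=
      mul_le_mul_of_nonneg_left hstep (by positivity)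
    refine h1.trans ?_
    set W := ∑ i ∈ Finset.range (N n), σ n i with hW
    set Q := ∑ i ∈ Finset.range (N n), (σ n i) ^ 2 with hQ
    have hW0 : 0 ≤ W := Finset.sum_nonneg fun i _ => hσ n i
    have hQ0 : 0 ≤ Q := Finset.sum_nonneg fun i _ => sq_nonneg _
    have hCS : W ^ 2 ≤ (N n : ℝ) * Q := by
      have := Finset.sum_mul_sq_le_sq_mul_sq (Finset.range (N n)) (fun _ => (1:ℝ)) (σ n)
      simpa [hW, hQ] using this
    have hs2 : (Real.sqrt (T n)) ^ 2 = (T n : ℝ) := Real.sq_sqrt hTpos.le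
    have hs0 : 0 ≤ Real.sqrt (T n) := Real.sqrt_nonneg _
    refine (Real.le_sqrt (by positivity) (by positivity)).2 ?_
    have e1 : ((N n : ℝ) * (T n : ℝ))⁻¹ * (W * Real.sqrt (T n))
        = (W * Real.sqrt (T n)) / ((N n : ℝ) * (T n : ℝ)) := by
      rw [inv_mul_eq_div]
    have e2 : (N n : ℝ)⁻¹ * Q / (T n : ℝ) = Q / ((N n : ℝ) * (T n : ℝ)) := by
      rw [inv_mul_eq_div, div_div]
    rw [e1, e2, div_pow, div_le_div_iff₀ (by positivity) (by positivity), mul_pow, hs2]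
    nlinarith [mul_le_mul_of_nonneg_right hCS
      (le_of_lt (mul_pos hTpos (mul_pos hNpos hTpos))), hNpos, hTpos]
  -- the permutation
  refine ⟨fun n ω =>
    if hinj : Function.Injective (F n ω) then
      Equiv.ofBijective (F n ω) ((Finite.injective_iff_bijective).1 hinj)
    else 1, ?_⟩
  intro ε hε
  set ε' : ℝ := min ε (MG / 2) with hε'def
  have hε'pos : 0 < ε' := lt_min hε (by linarith)
  set δ : ℝ := qmin * ε' ^ 2 / (2 * C) with hδdef
  have hδpos : 0 < δ := by positivity
  set a : ℕ → ℝ :=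
    fun n => ((N n : ℝ)⁻¹ * ∑ i ∈ Finset.range (N n), (σ n i) ^ 2) / (T n : ℝ) with hadef
  have hbound : ∀ᶠ n in atTop,
      P n {ω | ε < ⨆ g : Fin G, |μhat n ω
        ((if hinj : Function.Injective (F n ω) then
          Equiv.ofBijective (F n ω) ((Finite.injective_iff_bijective).1 hinj)
        else 1) g) - μ0 g|}
      ≤ ENNReal.ofReal (Real.sqrt (a n) / δ) := by
    filter_upwards [hN.eventually_ge_atTop 1, hT.eventually_ge_atTop 1] with n hN1 hT1
    haveI := hP n
    have hNR : (0:ℝ) < N n := lt_of_lt_of_le one_pos hN1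
    have hTR : (0:ℝ) < T n := lt_of_lt_of_le one_pos hT1
    have hNT : ((N n : ℝ) * (T n : ℝ)) ≠ 0 := by positivity
    have hsubset : {ω | ε < ⨆ g : Fin G, |μhat n ω
        ((if hinj : Function.Injective (F n ω) then
          Equiv.ofBijective (F n ω) ((Finite.injective_iff_bijective).1 hinj)
        else 1) g) - μ0 g|} ⊆ {ω | δ ≤ Z n ω} := by
      intro ω hω
      simp only [Set.mem_setOf_eq] at hω ⊢
      by_contra hZc
      push_neg at hZc
      -- establish the basic inequality from minimality
      set D : ℕ → ℝ := fun i => μ0 (g0 n i) - μhat n ω (ghat n ω i) with hDdef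
      have key := hmin n ω (g0 n) μ0 hμ0M
      have eL : ∀ i ∈ Finset.range (N n),
          ∑ t ∈ Finset.range (T n), (y n i t ω - μhat n ω (ghat n ω i)) ^ 2
          = ((T n : ℝ) * D i ^ 2 + (2 * D i * σ n i) * S n i ω)
            + ∑ t ∈ Finset.range (T n), (σ n i * v n i t ω) ^ 2 := by
        intro i _
        have hterm : ∀ t ∈ Finset.range (T n),
            (y n i t ω - μhat n ω (ghat n ω i)) ^ 2
            = (D i ^ 2 + (2 * D i * σ n i) * v n i t ω) + (σ n i * v n i t ω) ^ 2 := by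
          intro t _
          rw [hy, hDdef]
          ring
        rw [Finset.sum_congr rfl hterm, Finset.sum_add_distrib, Finset.sum_add_distrib,
          ← Finset.mul_sum, Finset.sum_const, Finset.card_range, nsmul_eq_mul, hSdef]
      have eR : ∀ i ∈ Finset.range (N n),
          ∑ t ∈ Finset.range (T n), (y n i t ω - μ0 (g0 n i)) ^ 2
          = ∑ t ∈ Finset.range (T n), (σ n i * v n i t ω) ^ 2 := by
        intro i _
        refine Finset.sum_congr rfl fun t _ => ?_
        rw [hy]
        ring
      rw [Finset.sum_congr rfl eL, Finset.sum_congr rfl eR, Finset.sum_add_distrib,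
        mul_add] at key
      have key2 : ((N n : ℝ) * (T n : ℝ))⁻¹ *
          ∑ i ∈ Finset.range (N n),
            ((T n : ℝ) * D i ^ 2 + (2 * D i * σ n i) * S n i ω) ≤ 0 := by
        linarith
      rw [Finset.sum_add_distrib, ← Finset.mul_sum] at key2
      have hcpos : (0:ℝ) < ((N n : ℝ) * (T n : ℝ))⁻¹ := by positivity
      have key3 : (T n : ℝ) * (∑ i ∈ Finset.range (N n), D i ^ 2)
          + ∑ i ∈ Finset.range (N n), (2 * D i * σ n i) * S n i ω ≤ 0 :=
        le_of_mul_le_mul_left (by simpa using key2) hcpos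
      have hbd : -(∑ i ∈ Finset.range (N n), (2 * D i * σ n i) * S n i ω)
          ≤ 2 * C * ∑ i ∈ Finset.range (N n), σ n i * |S n i ω| := by
        have hpt : ∀ i ∈ Finset.range (N n),
            -((2 * D i * σ n i) * S n i ω) ≤ 2 * C * (σ n i * |S n i ω|) := by
          intro i _
          have hDC : |D i| ≤ C := by
            rw [hDdef]
            exact hDbd n ω (g0 n i) (ghat n ω i)
          calc -((2 * D i * σ n i) * S n i ω) ≤ |(2 * D i * σ n i) * S n i ω| :=
                neg_le_abs _
          _ = 2 * |D i| * σ n i * |S n i ω| := by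
                rw [abs_mul, abs_mul, abs_mul, abs_two, abs_of_nonneg (hσ n i)]
          _ ≤ 2 * C * (σ n i * |S n i ω|) := by
                nlinarith [mul_le_mul_of_nonneg_right hDC
                  (mul_nonneg (hσ n i) (abs_nonneg (S n i ω)))]
        calc -(∑ i ∈ Finset.range (N n), (2 * D i * σ n i) * S n i ω)
            = ∑ i ∈ Finset.range (N n), -((2 * D i * σ n i) * S n i ω) := by
              rw [Finset.sum_neg_distrib]
        _ ≤ ∑ i ∈ Finset.range (N n), 2 * C * (σ n i * |S n i ω|) :=
              Finset.sum_le_sum hpt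
        _ = 2 * C * ∑ i ∈ Finset.range (N n), σ n i * |S n i ω| := by
              rw [Finset.mul_sum]
      have hZval : (N n : ℝ) * (T n : ℝ) * Z n ω
          = ∑ i ∈ Finset.range (N n), σ n i * |S n i ω| := by
        rw [hZdef]
        rw [← mul_assoc, mul_inv_cancel₀ hNT, one_mul]
      have key4 : (T n : ℝ) * (∑ i ∈ Finset.range (N n), D i ^ 2)
          ≤ 2 * C * ((N n : ℝ) * (T n : ℝ) * Z n ω) := by
        rw [hZval]
        linarith
      have key5 : (∑ i ∈ Finset.range (N n), D i ^ 2)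
          < (N n : ℝ) * (qmin * ε' ^ 2) := by
        have h2cd : 2 * C * δ = qmin * ε' ^ 2 := by
          rw [hδdef]
          field_simp
        have hA : (T n : ℝ) * (∑ i ∈ Finset.range (N n), D i ^ 2)
            < (T n : ℝ) * ((N n : ℝ) * (qmin * ε' ^ 2)) := by
          have hZδ : 2 * C * ((N n : ℝ) * (T n : ℝ) * Z n ω)
              < 2 * C * ((N n : ℝ) * (T n : ℝ) * δ) := by
            apply mul_lt_mul_of_pos_left _ (by positivity : (0:ℝ) < 2 * C)
            exact mul_lt_mul_of_pos_left hZc (by positivity)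
          have heq : 2 * C * ((N n : ℝ) * (T n : ℝ) * δ)
              = (T n : ℝ) * ((N n : ℝ) * (qmin * ε' ^ 2)) := by
            rw [show 2 * C * ((N n : ℝ) * (T n : ℝ) * δ)
              = (T n : ℝ) * ((N n : ℝ) * (2 * C * δ)) from by ring, h2cd]
          linarith
        exact lt_of_mul_lt_mul_left hA hTR.le
      -- existence of close centers for each group
      have hexists : ∀ g : Fin G, ∃ h : Fin G, |μhat n ω h - μ0 g| < ε' := by
        intro g
        by_contra hcon
        push_neg at hcon
        have hlow : ∀ i ∈ (Finset.range (N n)).filter (fun i => g0 n i = g),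
            ε' ^ 2 ≤ D i ^ 2 := by
          intro i hi
          have hg : g0 n i = g := (Finset.mem_filter.1 hi).2
          have h1 := hcon (ghat n ω i)
          have habs : ε' ≤ |D i| := by
            rw [hDdef]
            simp only
            rw [hg, abs_sub_comm]
            exact h1
          calc ε' ^ 2 ≤ |D i| ^ 2 := by nlinarith [hε'pos.le, abs_nonneg (D i)]
          _ = D i ^ 2 := sq_abs _
        have h1 : (qmin * (N n : ℝ)) * ε' ^ 2
            ≤ ∑ i ∈ (Finset.range (N n)).filter (fun i => g0 n i = g), D i ^ 2 := by
          calc (qmin * (N n : ℝ)) * ε' ^ 2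
              ≤ (((Finset.range (N n)).filter (fun i => g0 n i = g)).card : ℝ) * ε' ^ 2 :=
                mul_le_mul_of_nonneg_right (hgroup n g) (sq_nonneg _)
          _ = ∑ _i ∈ (Finset.range (N n)).filter (fun i => g0 n i = g), ε' ^ 2 := by
                rw [Finset.sum_const, nsmul_eq_mul]
          _ ≤ _ := Finset.sum_le_sum hlow
        have h2 : ∑ i ∈ (Finset.range (N n)).filter (fun i => g0 n i = g), D i ^ 2
            ≤ ∑ i ∈ Finset.range (N n), D i ^ 2 :=
          Finset.sum_le_sum_of_subset_of_nonneg (Finset.filter_subset _ _)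
            (fun _ _ _ => sq_nonneg _)
        have heq : (qmin * (N n : ℝ)) * ε' ^ 2 = (N n : ℝ) * (qmin * ε' ^ 2) := by ring
        linarith
      have hfg : ∀ g : Fin G, |μhat n ω (F n ω g) - μ0 g| < ε' := by
        intro g
        obtain ⟨h, hh⟩ := hexists g
        exact lt_of_le_of_lt (hF n ω g h) hh
      have hinj : Function.Injective (F n ω) := by
        intro g g' hgg'
        by_contra hne
        have h1 := hfg g
        have h2 := hfg g'
        rw [hgg'] at h1
        have hs := hsep g g' hne
        have htri : |μ0 g - μ0 g'| ≤ |μhat n ω (F n ω g') - μ0 g|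
            + |μhat n ω (F n ω g') - μ0 g'| := by
          calc |μ0 g - μ0 g'|
              ≤ |μ0 g - μhat n ω (F n ω g')| + |μhat n ω (F n ω g') - μ0 g'| :=
                abs_sub_le _ _ _
          _ = |μhat n ω (F n ω g') - μ0 g| + |μhat n ω (F n ω g') - μ0 g'| := by
                rw [abs_sub_comm (μ0 g)]
        have hε'le : ε' ≤ MG / 2 := min_le_right _ _
        linarith
      have hsup : (⨆ g : Fin G, |μhat n ω
          ((if hinj : Function.Injective (F n ω) then
            Equiv.ofBijective (F n ω) ((Finite.injective_iff_bijective).1 hinj)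
          else 1) g) - μ0 g|) ≤ ε := by
        rw [dif_pos hinj]
        refine ciSup_le fun g => ?_
        exact le_trans (hfg g).le (min_le_left _ _)
      exact absurd hω (not_lt.2 hsup)
    refine le_trans (measure_mono hsubset) ?_
    have hm := mul_meas_ge_le_integral_of_nonneg (ae_of_all _ (hZnn n)) (hZint n) δ
    have h3 : (P n {ω | δ ≤ Z n ω}).toReal ≤ Real.sqrt (a n) / δ := by
      rw [le_div_iff₀ hδpos]
      calc (P n {ω | δ ≤ Z n ω}).toReal * δ = δ * (P n {ω | δ ≤ Z n ω}).toReal :=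
            mul_comm _ _
      _ ≤ ∫ ω, Z n ω ∂(P n) := hm
      _ ≤ Real.sqrt (a n) := by rw [hadef]; exact hEZ n hNR hTR
    exact (ENNReal.le_ofReal_iff_toReal_le (measure_ne_top _ _) (by positivity)).2 h3
  have htend : Tendsto (fun n => ENNReal.ofReal (Real.sqrt (a n) / δ)) atTop (nhds 0) := by
    have h1 : Tendsto (fun n => Real.sqrt (a n)) atTop (nhds 0) := by
      have h := (Real.continuous_sqrt.tendsto 0).comp hA1ii
      rw [Real.sqrt_zero] at h
      exact h
    have h2 : Tendsto (fun n => Real.sqrt (a n) / δ) atTop (nhds 0) := by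
      simpa using h1.div_const δ
    have h3 := ENNReal.tendsto_ofReal h2
    simpa using h3
  exact tendsto_of_tendsto_of_tendsto_of_le_of_le' tendsto_const_nhds htend
    (Eventually.of_forall fun n => zero_le) hbound
end

section
/- Uniform approximation of the kmeans objective (Lemma A.2): Under parts (i)–(iii) of Assumption 1, for every ε > 0, P( sup over all group assignments g ∈ {1,…,G}^{N_n} and all μ ∈ M of | Q(g, μ) − (N_n T_n)^{-1} Σ_i Σ_t (σ_i v_{it})² − N_n^{-1} Σ_i (μ⁰_{g⁰_i} − μ_{g_i})² | > ε ) → 0 as n → ∞. -/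
open MeasureTheory ProbabilityTheory Filter Finset

-- L1 norm bounded by sqrt of second moment on a probability space
lemma aux_l1_le_sqrt_l2 {α : Type*} [MeasurableSpace α] {μ : Measure α} [IsProbabilityMeasure μ]
    {f : α → ℝ} (hf : MemLp f 2 μ) :
    ∫ ω, |f ω| ∂μ ≤ Real.sqrt (∫ ω, (f ω) ^ 2 ∂μ) := by
  have hpq : (2:ℝ).HolderConjugate 2 := Real.HolderConjugate.two_two
  have h1 : MemLp (fun ω => |f ω|) (ENNReal.ofReal (2:ℝ)) μ := by
    rw [ENNReal.ofReal_ofNat]; exact hf.abs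
  have hconst : MemLp (fun _ : α => (1:ℝ)) (ENNReal.ofReal (2:ℝ)) μ := memLp_const 1
  have := integral_mul_le_Lp_mul_Lq_of_nonneg hpq
    (f := fun ω => |f ω|) (g := fun _ => (1:ℝ))
    (ae_of_all _ fun ω => abs_nonneg _) (ae_of_all _ fun _ => zero_le_one) h1 hconst
  have h2 : ∀ ω : α, |f ω| ^ (2:ℝ) = (f ω) ^ 2 := fun ω => by
    rw [show ((2:ℝ)) = ((2:ℕ):ℝ) by norm_num, Real.rpow_natCast, sq_abs]
  simp only [mul_one, Real.one_rpow, h2, integral_const, measureReal_def, measure_univ, ENNReal.toReal_one,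
    smul_eq_mul, one_mul] at this
  rw [Real.sqrt_eq_rpow]
  exact this

-- second moment of a sum of independent mean-zero unit-variance variables
lemma aux_second_moment {α : Type*} [MeasurableSpace α] {μ : Measure α} [IsProbabilityMeasure μ]
    (T : ℕ) (v : ℕ → α → ℝ) (hmeas : ∀ t, Measurable (v t))
    (hindep : iIndepFun v μ)
    (hmean : ∀ t, ∫ ω, v t ω ∂μ = 0) (hvar : ∀ t, ∫ ω, (v t ω) ^ 2 ∂μ = 1) :
    ∫ ω, (∑ t ∈ Finset.range T, v t ω) ^ 2 ∂μ = T := by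
  have hsq : ∀ t, Integrable (fun ω => (v t ω) ^ 2) μ := by
    intro t
    by_contra h
    have h1 := hvar t
    rw [integral_undef h] at h1
    exact one_ne_zero h1.symm
  have hmem : ∀ t, MemLp (v t) 2 μ := fun t =>
    (memLp_two_iff_integrable_sq (hmeas t).aestronglyMeasurable).2 (hsq t)
  have hint : ∀ t, Integrable (v t) μ := fun t => (hmem t).integrable one_le_two
  have hintmul : ∀ s t, Integrable (fun ω => v s ω * v t ω) μ := by
    intro s t
    rcases eq_or_ne s t with rfl | hst
    · simpa [sq] using hsq s
    · exact (hindep.indepFun hst).integrable_mul (hint s) (hint t)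
  have hexp : ∀ ω, (∑ t ∈ Finset.range T, v t ω) ^ 2
      = ∑ s ∈ Finset.range T, ∑ t ∈ Finset.range T, v s ω * v t ω := by
    intro ω
    rw [sq, Finset.sum_mul_sum]
  calc ∫ ω, (∑ t ∈ Finset.range T, v t ω) ^ 2 ∂μ
      = ∫ ω, ∑ s ∈ Finset.range T, ∑ t ∈ Finset.range T, v s ω * v t ω ∂μ := by
        simp_rw [hexp]
    _ = ∑ s ∈ Finset.range T, ∑ t ∈ Finset.range T, ∫ ω, v s ω * v t ω ∂μ := by
        rw [integral_finset_sum _ fun s _ => integrable_finset_sum _ fun t _ => hintmul s t]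
        exact Finset.sum_congr rfl fun s _ => integral_finset_sum _ fun t _ => hintmul s t
    _ = ∑ s ∈ Finset.range T, ∑ t ∈ Finset.range T, (if s = t then (1:ℝ) else 0) := by
        refine Finset.sum_congr rfl fun s _ => Finset.sum_congr rfl fun t _ => ?_
        rcases eq_or_ne s t with rfl | hst
        · simpa [sq] using hvar s
        · rw [if_neg hst]
          exact ((hindep.indepFun hst).integral_mul_eq_mul_integral (hint s).aestronglyMeasurable (hint t).aestronglyMeasurable).trans
            (by rw [hmean s, zero_mul])
    _ = T := by
        have h1 : ∀ s ∈ Finset.range T,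
            (∑ t ∈ Finset.range T, if s = t then (1:ℝ) else 0) = 1 := fun s hs => by
          rw [Finset.sum_ite_eq, if_pos hs]
        rw [Finset.sum_congr rfl h1, Finset.sum_const, Finset.card_range, nsmul_eq_mul, mul_one]


/-- **Lemma A.2 (Uniform approximation of the kmeans objective).**
Under parts (i)–(iii) of Assumption 1, for every `ε > 0`, the probability that the kmeans
objective `Q(g, μ)` deviates from
`(NT)^{-1} Σ_i Σ_t (σ_i v_{it})² + N^{-1} Σ_i (μ⁰_{g⁰_i} − μ_{g_i})²`
by more than `ε`, uniformly over all group assignments `g` and all `μ ∈ M`,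
converges to zero. -/
theorem uniform_objective_approximation
    {G : ℕ} (hG : 0 < G)
    (Ω : ℕ → Type) (mΩ : ∀ n, MeasurableSpace (Ω n))
    (P : ∀ n, Measure (Ω n)) (hP : ∀ n, IsProbabilityMeasure (P n))
    (N T : ℕ → ℕ)
    (hN : Tendsto (fun n => (N n : ℝ)) atTop atTop)
    (hT : Tendsto (fun n => (T n : ℝ)) atTop atTop)
    (hrate : Tendsto
      (fun n => Real.log (T n) * Real.sqrt (Real.log (N n)) / Real.sqrt (T n))
      atTop (nhds 0))
    -- data generating process
    (v : ∀ n, ℕ → ℕ → Ω n → ℝ) (hvmeas : ∀ n i t, Measurable (v n i t))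
    (σ : ℕ → ℕ → ℝ) (hσ : ∀ n i, 0 ≤ σ n i)
    (g0 : ℕ → ℕ → Fin G) (μ0 : Fin G → ℝ)
    (y : ∀ n, ℕ → ℕ → Ω n → ℝ)
    (hy : ∀ n i t ω, y n i t ω = μ0 (g0 n i) + σ n i * v n i t ω)
    -- Assumption 1(i): independence over time, mean zero, unit variance
    (hindep : ∀ n i, iIndepFun (fun t => v n i t) (P n))
    (hmean : ∀ n i t, ∫ ω, v n i t ω ∂(P n) = 0)
    (hvar : ∀ n i t, ∫ ω, (v n i t ω) ^ 2 ∂(P n) = 1)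
    -- Assumption 1(ii): average error variance is o(T)
    (hA1ii : Tendsto
      (fun n => ((N n : ℝ)⁻¹ * ∑ i ∈ Finset.range (N n), (σ n i) ^ 2) / (T n : ℝ))
      atTop (nhds 0))
    -- Assumption 1(iii): bounded parameter set containing the truth
    (M : Set (Fin G → ℝ)) (hMbdd : Bornology.IsBounded M) (hμ0M : μ0 ∈ M)
    (ε : ℝ) (hε : 0 < ε) :
    Tendsto (fun n => P n {ω | ∃ (g : ℕ → Fin G), ∃ μ ∈ M,
        ε < |((N n : ℝ) * (T n : ℝ))⁻¹ * ∑ i ∈ Finset.range (N n), ∑ t ∈ Finset.range (T n),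
              (y n i t ω - μ (g i)) ^ 2
            - ((N n : ℝ) * (T n : ℝ))⁻¹ * ∑ i ∈ Finset.range (N n), ∑ t ∈ Finset.range (T n),
              (σ n i * v n i t ω) ^ 2
            - (N n : ℝ)⁻¹ * ∑ i ∈ Finset.range (N n), (μ0 (g0 n i) - μ (g i)) ^ 2|})
      atTop (nhds 0) := by
  classical
  -- a uniform bound on coordinate differences over M
  obtain ⟨R, hR⟩ := hMbdd.exists_norm_le
  set C : ℝ := 2 * R + 1 with hCdef
  have hR0 : 0 ≤ R := le_trans (norm_nonneg μ0) (hR μ0 hμ0M)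
  have hC0 : 0 < C := by simp only [hCdef]; linarith
  have hΔ : ∀ μ ∈ M, ∀ k j : Fin G, |μ0 k - μ j| ≤ C := by
    intro μ hμ k j
    have h1 : |μ0 k| ≤ R := by
      have := norm_le_pi_norm μ0 k
      simp only [Real.norm_eq_abs] at this
      exact this.trans (hR μ0 hμ0M)
    have h2 : |μ j| ≤ R := by
      have := norm_le_pi_norm μ k
      have h3 := norm_le_pi_norm μ j
      simp only [Real.norm_eq_abs] at h3
      exact h3.trans (hR μ hμ)
    calc |μ0 k - μ j| ≤ |μ0 k| + |μ j| := abs_sub _ _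
      _ ≤ C := by simp only [hCdef]; linarith
  -- memLp and integrability of the noise
  have hmem : ∀ n i t, MemLp (v n i t) 2 (P n) := by
    intro n i t
    haveI := hP n
    refine (memLp_two_iff_integrable_sq (hvmeas n i t).aestronglyMeasurable).2 ?_
    by_contra h
    have h1 := hvar n i t
    rw [integral_undef h] at h1
    exact one_ne_zero h1.symm
  have hvint : ∀ n i t, Integrable (v n i t) (P n) := by
    intro n i t
    haveI := hP n
    exact (hmem n i t).integrable one_le_two
  -- the maximal quantity S
  set S : ∀ n, Ω n → ℝ := fun n ω =>
    ((N n : ℝ) * (T n : ℝ))⁻¹ * ∑ i ∈ Finset.range (N n),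
      σ n i * |∑ t ∈ Finset.range (T n), v n i t ω| with hSdef
  have hS0 : ∀ n ω, 0 ≤ S n ω := by
    intro n ω
    apply mul_nonneg (inv_nonneg.2 (by positivity))
    exact Finset.sum_nonneg fun i _ => mul_nonneg (hσ n i) (abs_nonneg _)
  have hSint : ∀ n, Integrable (S n) (P n) := by
    intro n
    haveI := hP n
    exact (integrable_finset_sum _ fun i _ =>
      ((integrable_finset_sum _ fun t _ => hvint n i t).abs.const_mul (σ n i))).const_mul _
  -- the bound sequence
  set a : ℕ → ℝ := fun n =>
    Real.sqrt (((N n : ℝ)⁻¹ * ∑ i ∈ Finset.range (N n), (σ n i) ^ 2) / (T n : ℝ)) with hadef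
  have ha0 : Tendsto a atTop (nhds 0) := by
    have := hA1ii.sqrt
    rwa [Real.sqrt_zero] at this
  set ε' : ℝ := ε / (2 * C) with hε'def
  have hε'0 : 0 < ε' := div_pos hε (by linarith)
  -- the key eventual bound
  have key : ∀ᶠ n in atTop, P n {ω | ∃ (g : ℕ → Fin G), ∃ μ ∈ M,
        ε < |((N n : ℝ) * (T n : ℝ))⁻¹ * ∑ i ∈ Finset.range (N n), ∑ t ∈ Finset.range (T n),
              (y n i t ω - μ (g i)) ^ 2
            - ((N n : ℝ) * (T n : ℝ))⁻¹ * ∑ i ∈ Finset.range (N n), ∑ t ∈ Finset.range (T n),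
              (σ n i * v n i t ω) ^ 2
            - (N n : ℝ)⁻¹ * ∑ i ∈ Finset.range (N n), (μ0 (g0 n i) - μ (g i)) ^ 2|}
      ≤ ENNReal.ofReal (a n / ε') := by
    filter_upwards [hN.eventually_ge_atTop 1, hT.eventually_ge_atTop 1] with n hNn hTn
    haveI := hP n
    have hN0 : (0:ℝ) < N n := lt_of_lt_of_le zero_lt_one hNn
    have hT0 : (0:ℝ) < T n := lt_of_lt_of_le zero_lt_one hTn
    -- Step 1: the event is contained in {ε' ≤ S n}
    have hsub : {ω | ∃ (g : ℕ → Fin G), ∃ μ ∈ M,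
        ε < |((N n : ℝ) * (T n : ℝ))⁻¹ * ∑ i ∈ Finset.range (N n), ∑ t ∈ Finset.range (T n),
              (y n i t ω - μ (g i)) ^ 2
            - ((N n : ℝ) * (T n : ℝ))⁻¹ * ∑ i ∈ Finset.range (N n), ∑ t ∈ Finset.range (T n),
              (σ n i * v n i t ω) ^ 2
            - (N n : ℝ)⁻¹ * ∑ i ∈ Finset.range (N n), (μ0 (g0 n i) - μ (g i)) ^ 2|}
        ⊆ {ω | ε' ≤ S n ω} := by
      rintro ω ⟨g, μ, hμM, hgt⟩
      have hid : ((N n : ℝ) * (T n : ℝ))⁻¹ * ∑ i ∈ Finset.range (N n), ∑ t ∈ Finset.range (T n),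
              (y n i t ω - μ (g i)) ^ 2
            - ((N n : ℝ) * (T n : ℝ))⁻¹ * ∑ i ∈ Finset.range (N n), ∑ t ∈ Finset.range (T n),
              (σ n i * v n i t ω) ^ 2
            - (N n : ℝ)⁻¹ * ∑ i ∈ Finset.range (N n), (μ0 (g0 n i) - μ (g i)) ^ 2
          = ((N n : ℝ) * (T n : ℝ))⁻¹ * ∑ i ∈ Finset.range (N n),
              (2 * (μ0 (g0 n i) - μ (g i)) * σ n i * ∑ t ∈ Finset.range (T n), v n i t ω) := by
        have e1 : ∀ i ∈ Finset.range (N n),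
            ∑ t ∈ Finset.range (T n), (y n i t ω - μ (g i)) ^ 2
            = (∑ t ∈ Finset.range (T n), (σ n i * v n i t ω) ^ 2)
              + (T n : ℝ) * (μ0 (g0 n i) - μ (g i)) ^ 2
              + 2 * (μ0 (g0 n i) - μ (g i)) * σ n i * ∑ t ∈ Finset.range (T n), v n i t ω := by
          intro i _
          have e2 : ∀ t ∈ Finset.range (T n), (y n i t ω - μ (g i)) ^ 2
              = (σ n i * v n i t ω) ^ 2 + (μ0 (g0 n i) - μ (g i)) ^ 2
                + 2 * (μ0 (g0 n i) - μ (g i)) * σ n i * v n i t ω := fun t _ => by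
            rw [hy]; ring
          rw [Finset.sum_congr rfl e2, Finset.sum_add_distrib, Finset.sum_add_distrib,
            Finset.sum_const, Finset.card_range, ← Finset.mul_sum, nsmul_eq_mul]
        rw [Finset.sum_congr rfl e1, Finset.sum_add_distrib, Finset.sum_add_distrib,
          ← Finset.mul_sum]
        have hT0' : (T n : ℝ) ≠ 0 := ne_of_gt hT0
        have hN0' : (N n : ℝ) ≠ 0 := ne_of_gt hN0
        field_simp
        ring
      have habs : |((N n : ℝ) * (T n : ℝ))⁻¹ * ∑ i ∈ Finset.range (N n),
              (2 * (μ0 (g0 n i) - μ (g i)) * σ n i * ∑ t ∈ Finset.range (T n), v n i t ω)|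
          ≤ 2 * C * S n ω := by
        rw [abs_mul, abs_of_nonneg (inv_nonneg.2 (by positivity : (0:ℝ) ≤ (N n : ℝ) * (T n : ℝ)))]
        rw [hSdef]
        simp only []
        rw [mul_comm (2*C) _, mul_assoc]
        apply mul_le_mul_of_nonneg_left _ (inv_nonneg.2 (by positivity))
        calc |∑ i ∈ Finset.range (N n),
                (2 * (μ0 (g0 n i) - μ (g i)) * σ n i * ∑ t ∈ Finset.range (T n), v n i t ω)|
            ≤ ∑ i ∈ Finset.range (N n),
                |2 * (μ0 (g0 n i) - μ (g i)) * σ n i * ∑ t ∈ Finset.range (T n), v n i t ω| :=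
              Finset.abs_sum_le_sum_abs _ _
          _ ≤ ∑ i ∈ Finset.range (N n),
                (σ n i * |∑ t ∈ Finset.range (T n), v n i t ω|) * (2 * C) := by
              refine Finset.sum_le_sum fun i _ => ?_
              rw [abs_mul, abs_mul, abs_mul, abs_two]
              have h1 : |μ0 (g0 n i) - μ (g i)| ≤ C := hΔ μ hμM _ _
              have h2 : |σ n i| = σ n i := abs_of_nonneg (hσ n i)
              rw [h2]
              calc 2 * |μ0 (g0 n i) - μ (g i)| * σ n i * |∑ t ∈ Finset.range (T n), v n i t ω|
                  ≤ 2 * C * σ n i * |∑ t ∈ Finset.range (T n), v n i t ω| := by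
                    apply mul_le_mul_of_nonneg_right _ (abs_nonneg _)
                    apply mul_le_mul_of_nonneg_right _ (hσ n i)
                    exact mul_le_mul_of_nonneg_left h1 (by norm_num)
                _ = (σ n i * |∑ t ∈ Finset.range (T n), v n i t ω|) * (2 * C) := by ring
          _ = (∑ i ∈ Finset.range (N n),
                σ n i * |∑ t ∈ Finset.range (T n), v n i t ω|) * (2 * C) := by
              rw [← Finset.sum_mul]
      have h3 : ε < 2 * C * S n ω := lt_of_lt_of_le (by rwa [hid] at hgt) habs
      show ε' ≤ S n ω
      rw [hε'def, div_le_iff₀ (by linarith : (0:ℝ) < 2 * C)]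
      rw [mul_comm] at h3
      exact le_of_lt h3
    -- Step 2: Markov's inequality
    have hmarkov := mul_meas_ge_le_integral_of_nonneg
      (ae_of_all (P n) fun ω => hS0 n ω) (hSint n) ε'
    -- Step 3: bound the integral of S
    have hintS : ∫ ω, S n ω ∂(P n) ≤ a n := by
      have hW2 : ∀ i, ∫ ω, (∑ t ∈ Finset.range (T n), v n i t ω) ^ 2 ∂(P n) = (T n : ℝ) :=
        fun i => aux_second_moment (T n) (fun t => v n i t) (fun t => hvmeas n i t)
          (hindep n i) (fun t => hmean n i t) (fun t => hvar n i t)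
      have hWmem : ∀ i, MemLp (fun ω => ∑ t ∈ Finset.range (T n), v n i t ω) 2 (P n) :=
        fun i => memLp_finset_sum _ fun t _ => hmem n i t
      have hWl1 : ∀ i, ∫ ω, |∑ t ∈ Finset.range (T n), v n i t ω| ∂(P n)
          ≤ Real.sqrt (T n : ℝ) := fun i => by
        have := aux_l1_le_sqrt_l2 (hWmem i)
        rwa [hW2 i] at this
      have hWint : ∀ i, Integrable (fun ω => ∑ t ∈ Finset.range (T n), v n i t ω) (P n) :=
        fun i => integrable_finset_sum _ fun t _ => hvint n i t
      have hSrw : ∫ ω, S n ω ∂(P n) = ((N n : ℝ) * (T n : ℝ))⁻¹ *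
          ∑ i ∈ Finset.range (N n),
            σ n i * ∫ ω, |∑ t ∈ Finset.range (T n), v n i t ω| ∂(P n) := by
        rw [hSdef]
        simp only []
        rw [integral_const_mul, integral_finset_sum _ fun i _ => ((hWint i).abs.const_mul _)]
        congr 1
        exact Finset.sum_congr rfl fun i _ => integral_const_mul _ _
      rw [hSrw]
      have hstep : ((N n : ℝ) * (T n : ℝ))⁻¹ *
          ∑ i ∈ Finset.range (N n),
            σ n i * ∫ ω, |∑ t ∈ Finset.range (T n), v n i t ω| ∂(P n)
          ≤ ((N n : ℝ) * (T n : ℝ))⁻¹ *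
            ((∑ i ∈ Finset.range (N n), σ n i) * Real.sqrt (T n : ℝ)) := by
        apply mul_le_mul_of_nonneg_left _ (inv_nonneg.2 (by positivity))
        rw [Finset.sum_mul]
        refine Finset.sum_le_sum fun i _ => ?_
        exact mul_le_mul_of_nonneg_left (hWl1 i) (hσ n i)
      refine hstep.trans ?_
      -- Cauchy–Schwarz over units
      set A : ℝ := ∑ i ∈ Finset.range (N n), σ n i with hAdef
      set B : ℝ := ∑ i ∈ Finset.range (N n), (σ n i) ^ 2 with hBdef
      have hA0 : 0 ≤ A := Finset.sum_nonneg fun i _ => hσ n i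
      have hB0 : 0 ≤ B := Finset.sum_nonneg fun i _ => sq_nonneg _
      have hCS : A ^ 2 ≤ (N n : ℝ) * B := by
        have := Finset.sum_mul_sq_le_sq_mul_sq (Finset.range (N n))
          (fun _ => (1:ℝ)) (σ n)
        simpa [hAdef, hBdef] using this
      rw [hadef]
      apply Real.le_sqrt_of_sq_le
      have hsq : (Real.sqrt (T n : ℝ)) ^ 2 = (T n : ℝ) := Real.sq_sqrt hT0.le
      have h4 : (((N n : ℝ) * (T n : ℝ))⁻¹ * (A * Real.sqrt (T n : ℝ))) ^ 2
          = (((N n : ℝ) * (T n : ℝ))⁻¹) ^ 2 * A ^ 2 * (T n : ℝ) := by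
        rw [mul_pow, mul_pow, hsq]; ring
      rw [h4]
      calc (((N n : ℝ) * (T n : ℝ))⁻¹) ^ 2 * A ^ 2 * (T n : ℝ)
          ≤ (((N n : ℝ) * (T n : ℝ))⁻¹) ^ 2 * ((N n : ℝ) * B) * (T n : ℝ) := by
            apply mul_le_mul_of_nonneg_right _ hT0.le
            exact mul_le_mul_of_nonneg_left hCS (by positivity)
        _ = ((N n : ℝ)⁻¹ * B) / (T n : ℝ) := by
            have hT0' : (T n : ℝ) ≠ 0 := ne_of_gt hT0
            have hN0' : (N n : ℝ) ≠ 0 := ne_of_gt hN0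
            field_simp
    -- Step 4: combine
    have htoReal : (P n {ω | ε' ≤ S n ω}).toReal ≤ a n / ε' := by
      rw [le_div_iff₀ hε'0]
      calc (P n {ω | ε' ≤ S n ω}).toReal * ε'
          = ε' * (P n {ω | ε' ≤ S n ω}).toReal := mul_comm _ _
        _ ≤ ∫ ω, S n ω ∂(P n) := hmarkov
        _ ≤ a n := hintS
    calc P n {ω | ∃ (g : ℕ → Fin G), ∃ μ ∈ M,
        ε < |((N n : ℝ) * (T n : ℝ))⁻¹ * ∑ i ∈ Finset.range (N n), ∑ t ∈ Finset.range (T n),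
              (y n i t ω - μ (g i)) ^ 2
            - ((N n : ℝ) * (T n : ℝ))⁻¹ * ∑ i ∈ Finset.range (N n), ∑ t ∈ Finset.range (T n),
              (σ n i * v n i t ω) ^ 2
            - (N n : ℝ)⁻¹ * ∑ i ∈ Finset.range (N n), (μ0 (g0 n i) - μ (g i)) ^ 2|}
        ≤ P n {ω | ε' ≤ S n ω} := measure_mono hsub
      _ = ENNReal.ofReal ((P n {ω | ε' ≤ S n ω}).toReal) :=
          (ENNReal.ofReal_toReal (measure_ne_top _ _)).symm
      _ ≤ ENNReal.ofReal (a n / ε') := ENNReal.ofReal_le_ofReal htoReal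
  -- conclude by squeezing
  have hub : Tendsto (fun n => ENNReal.ofReal (a n / ε')) atTop (nhds 0) := by
    have h1 : Tendsto (fun n => a n / ε') atTop (nhds 0) := by
      simpa using ha0.div_const ε'
    have h2 := (ENNReal.continuous_ofReal.tendsto 0).comp h1
    rwa [ENNReal.ofReal_zero] at h2
  exact tendsto_of_tendsto_of_tendsto_of_le_of_le' tendsto_const_nhds hub
    (Eventually.of_forall fun n => zero_le) key
end

section
/- Mean-squared consistency of fitted means (Lemma A.3): Under parts (i)–(iii) of Assumption 1, for every ε > 0, P( N_n^{-1} Σ_{i=1}^{N_n} (μ⁰_{g⁰_i} − μ̂_{ĝ_i})² > ε ) → 0 as n → ∞. -/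
open MeasureTheory ProbabilityTheory Filter Finset

lemma sum_indep_sq_integral {Ω : Type} [MeasurableSpace Ω] (P : Measure Ω)
    [IsProbabilityMeasure P] (f : ℕ → Ω → ℝ) (hmeas : ∀ t, Measurable (f t))
    (hindep : iIndepFun f P)
    (hmean : ∀ t, ∫ ω, f t ω ∂P = 0) (hvar : ∀ t, ∫ ω, (f t ω) ^ 2 ∂P = 1) (T : ℕ) :
    ∫ ω, (∑ t ∈ Finset.range T, f t ω) ^ 2 ∂P = T := by
  have hint2 : ∀ t, Integrable (fun ω => (f t ω) ^ 2) P := by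
    intro t
    by_contra h
    have := hvar t
    rw [integral_undef h] at this
    exact one_ne_zero this.symm
  have hmem : ∀ t, MemLp (f t) 2 P := fun t =>
    (memLp_two_iff_integrable_sq (hmeas t).aestronglyMeasurable).2 (hint2 t)
  have hint1 : ∀ t, Integrable (f t) P := fun t => (hmem t).integrable one_le_two
  have hintp : ∀ t s, Integrable (fun ω => f t ω * f s ω) P := by
    intro t s
    rcases eq_or_ne t s with rfl | hts
    · simpa [pow_two] using hint2 t
    · exact (hindep.indepFun hts).integrable_mul (hint1 t) (hint1 s)
  have hI : ∀ t s, t ≠ s → ∫ ω, f t ω * f s ω ∂P = 0 := by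
    intro t s hts
    have h := (hindep.indepFun hts).integral_mul_eq_mul_integral (hint1 t).aestronglyMeasurable (hint1 s).aestronglyMeasurable
    simpa [Pi.mul_apply, hmean t, hmean s] using h
  calc ∫ ω, (∑ t ∈ Finset.range T, f t ω) ^ 2 ∂P
      = ∫ ω, ∑ t ∈ Finset.range T, ∑ s ∈ Finset.range T, f t ω * f s ω ∂P := by
        congr 1; funext ω; rw [sq, Finset.sum_mul_sum]
    _ = ∑ t ∈ Finset.range T, ∑ s ∈ Finset.range T, ∫ ω, f t ω * f s ω ∂P := by
        rw [integral_finset_sum _ fun t _ =>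
          integrable_finset_sum _ fun s _ => hintp t s]
        exact Finset.sum_congr rfl fun t _ =>
          integral_finset_sum _ fun s _ => hintp t s
    _ = ∑ t ∈ Finset.range T, (1 : ℝ) := by
        refine Finset.sum_congr rfl fun t ht => ?_
        rw [Finset.sum_eq_single t (fun s _ hs => hI t s (Ne.symm hs))
          (fun h => absurd ht h)]
        simpa [pow_two] using hvar t
    _ = T := by simp

/-- **Lemma A.3 (Mean-squared consistency of fitted means).**
Under parts (i)–(iii) of Assumption 1, for every `ε > 0`,
`P ( N^{-1} Σ_i (μ⁰_{g⁰_i} − μ̂_{ĝ_i})² > ε ) → 0`. -/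
theorem fitted_means_mean_squared_consistency
    {G : ℕ} (hG : 0 < G)
    (Ω : ℕ → Type) (mΩ : ∀ n, MeasurableSpace (Ω n))
    (P : ∀ n, Measure (Ω n)) (hP : ∀ n, IsProbabilityMeasure (P n))
    (N T : ℕ → ℕ)
    (hN : Tendsto (fun n => (N n : ℝ)) atTop atTop)
    (hT : Tendsto (fun n => (T n : ℝ)) atTop atTop)
    (hrate : Tendsto
      (fun n => Real.log (T n) * Real.sqrt (Real.log (N n)) / Real.sqrt (T n))
      atTop (nhds 0))
    -- data generating process
    (v : ∀ n, ℕ → ℕ → Ω n → ℝ) (hvmeas : ∀ n i t, Measurable (v n i t))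
    (σ : ℕ → ℕ → ℝ) (hσ : ∀ n i, 0 ≤ σ n i)
    (g0 : ℕ → ℕ → Fin G) (μ0 : Fin G → ℝ)
    (y : ∀ n, ℕ → ℕ → Ω n → ℝ)
    (hy : ∀ n i t ω, y n i t ω = μ0 (g0 n i) + σ n i * v n i t ω)
    -- Assumption 1(i): independence over time, mean zero, unit variance
    (hindep : ∀ n i, iIndepFun (fun t => v n i t) (P n))
    (hmean : ∀ n i t, ∫ ω, v n i t ω ∂(P n) = 0)
    (hvar : ∀ n i t, ∫ ω, (v n i t ω) ^ 2 ∂(P n) = 1)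
    -- Assumption 1(ii): average error variance is o(T)
    (hA1ii : Tendsto
      (fun n => ((N n : ℝ)⁻¹ * ∑ i ∈ Finset.range (N n), (σ n i) ^ 2) / (T n : ℝ))
      atTop (nhds 0))
    -- Assumption 1(iii): bounded parameter set containing the truth
    (M : Set (Fin G → ℝ)) (hMbdd : Bornology.IsBounded M) (hμ0M : μ0 ∈ M)
    -- the kmeans estimator: joint minimizer of the objective
    (μhat : ∀ n, Ω n → Fin G → ℝ) (ghat : ∀ n, Ω n → ℕ → Fin G)
    (hμhatM : ∀ n ω, μhat n ω ∈ M)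
    (hmin : ∀ n ω (g : ℕ → Fin G) (μ : Fin G → ℝ), μ ∈ M →
      ((N n : ℝ) * (T n : ℝ))⁻¹ * ∑ i ∈ Finset.range (N n), ∑ t ∈ Finset.range (T n),
          (y n i t ω - μhat n ω (ghat n ω i)) ^ 2
        ≤ ((N n : ℝ) * (T n : ℝ))⁻¹ * ∑ i ∈ Finset.range (N n), ∑ t ∈ Finset.range (T n),
          (y n i t ω - μ (g i)) ^ 2)
    (ε : ℝ) (hε : 0 < ε) :
    Tendsto (fun n => P n {ω |
        ε < (N n : ℝ)⁻¹ * ∑ i ∈ Finset.range (N n),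
              (μ0 (g0 n i) - μhat n ω (ghat n ω i)) ^ 2})
      atTop (nhds 0) := by
  -- pointwise key bound: objective comparison + AM-GM
  have key : ∀ n, 0 < N n → 0 < T n → ∀ ω : Ω n,
      (N n : ℝ)⁻¹ * ∑ i ∈ Finset.range (N n),
          (μ0 (g0 n i) - μhat n ω (ghat n ω i)) ^ 2
        ≤ 4 * ((N n : ℝ)⁻¹ * ∑ i ∈ Finset.range (N n),
            (σ n i) ^ 2 * ((T n : ℝ)⁻¹ * ∑ t ∈ Finset.range (T n), v n i t ω) ^ 2) := by
    intro n hNn hTn ω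
    have hTpos : (0:ℝ) < T n := by exact_mod_cast hTn
    have hNpos : (0:ℝ) < N n := by exact_mod_cast hNn
    have hc : (0:ℝ) < ((N n : ℝ) * (T n : ℝ))⁻¹ := by positivity
    set D : ℕ → ℝ := fun i => μ0 (g0 n i) - μhat n ω (ghat n ω i) with hD
    set S : ℕ → ℝ := fun i => ∑ t ∈ Finset.range (T n), v n i t ω with hS
    have hAB : ∑ i ∈ Finset.range (N n), ∑ t ∈ Finset.range (T n),
          (y n i t ω - μhat n ω (ghat n ω i)) ^ 2
        ≤ ∑ i ∈ Finset.range (N n), ∑ t ∈ Finset.range (T n),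
          (y n i t ω - μ0 (g0 n i)) ^ 2 :=
      le_of_mul_le_mul_left (by
        have := hmin n ω (g0 n) μ0 hμ0M
        calc ((N n : ℝ) * (T n : ℝ))⁻¹ * _ ≤ _ := this) hc
    have hL : ∀ i, ∑ t ∈ Finset.range (T n), (y n i t ω - μhat n ω (ghat n ω i)) ^ 2
        = (T n : ℝ) * D i ^ 2 + 2 * (D i * σ n i * S i)
          + σ n i ^ 2 * ∑ t ∈ Finset.range (T n), (v n i t ω) ^ 2 := by
      intro i
      have h1 : ∀ t ∈ Finset.range (T n), (y n i t ω - μhat n ω (ghat n ω i)) ^ 2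
          = D i ^ 2 + (2 * (D i * σ n i)) * v n i t ω + σ n i ^ 2 * (v n i t ω) ^ 2 := by
        intro t _; rw [hy]; simp only [hD]; ring
      rw [Finset.sum_congr rfl h1, Finset.sum_add_distrib, Finset.sum_add_distrib,
        Finset.sum_const, ← Finset.mul_sum, ← Finset.mul_sum, Finset.card_range,
        nsmul_eq_mul]
      ring
    have hR : ∀ i, ∑ t ∈ Finset.range (T n), (y n i t ω - μ0 (g0 n i)) ^ 2
        = σ n i ^ 2 * ∑ t ∈ Finset.range (T n), (v n i t ω) ^ 2 := by
      intro i
      rw [Finset.mul_sum]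
      refine Finset.sum_congr rfl fun t _ => ?_
      rw [hy]; ring
    rw [Finset.sum_congr rfl fun i _ => hL i, Finset.sum_congr rfl fun i _ => hR i,
      Finset.sum_add_distrib, Finset.sum_add_distrib] at hAB
    set A : ℝ := ∑ i ∈ Finset.range (N n), D i ^ 2 with hA
    set B : ℝ := ∑ i ∈ Finset.range (N n), D i * σ n i * S i with hB
    set C : ℝ := ∑ i ∈ Finset.range (N n), (σ n i * S i) ^ 2 with hC
    have hA' : (T n : ℝ) * A + 2 * B ≤ 0 := by
      have e1 : ∑ i ∈ Finset.range (N n), (T n : ℝ) * D i ^ 2 = (T n : ℝ) * A := by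
        rw [hA, Finset.mul_sum]
      have e2 : ∑ i ∈ Finset.range (N n), 2 * (D i * σ n i * S i) = 2 * B := by
        rw [hB, Finset.mul_sum]
      linarith [hAB, e1.symm.le, e2.symm.le, e1, e2]
    have hsum0 : (0:ℝ) ≤ (T n : ℝ) ^ 2 * A + 4 * (T n : ℝ) * B + 4 * C := by
      have h0 : (0:ℝ) ≤ ∑ i ∈ Finset.range (N n),
          ((T n : ℝ) * D i + 2 * (σ n i * S i)) ^ 2 :=
        Finset.sum_nonneg fun i _ => sq_nonneg _
      have he : ∑ i ∈ Finset.range (N n), ((T n : ℝ) * D i + 2 * (σ n i * S i)) ^ 2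
          = (T n : ℝ) ^ 2 * A + 4 * (T n : ℝ) * B + 4 * C := by
        rw [hA, hB, hC, Finset.mul_sum, Finset.mul_sum, Finset.mul_sum,
          ← Finset.sum_add_distrib, ← Finset.sum_add_distrib]
        exact Finset.sum_congr rfl fun i _ => by ring
      linarith [he ▸ h0]
    have hAC : A ≤ 4 * C / (T n : ℝ) ^ 2 := by
      rw [le_div_iff₀ (by positivity)]
      have h2 : (T n : ℝ) * ((T n : ℝ) * A + 2 * B) ≤ (T n : ℝ) * 0 :=
        mul_le_mul_of_nonneg_left hA' hTpos.le
      nlinarith [hsum0, h2]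
    have hCsum : ∑ i ∈ Finset.range (N n),
        (σ n i) ^ 2 * ((T n : ℝ)⁻¹ * ∑ t ∈ Finset.range (T n), v n i t ω) ^ 2
        = C / (T n : ℝ) ^ 2 := by
      rw [hC, Finset.sum_div]
      refine Finset.sum_congr rfl fun i _ => ?_
      rw [hS]
      field_simp
    calc (N n : ℝ)⁻¹ * ∑ i ∈ Finset.range (N n),
            (μ0 (g0 n i) - μhat n ω (ghat n ω i)) ^ 2
        = (N n : ℝ)⁻¹ * A := rfl
      _ ≤ (N n : ℝ)⁻¹ * (4 * C / (T n : ℝ) ^ 2) :=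
          mul_le_mul_of_nonneg_left hAC (by positivity)
      _ = 4 * ((N n : ℝ)⁻¹ * (C / (T n : ℝ) ^ 2)) := by ring
      _ = 4 * ((N n : ℝ)⁻¹ * ∑ i ∈ Finset.range (N n),
            (σ n i) ^ 2 * ((T n : ℝ)⁻¹ * ∑ t ∈ Finset.range (T n), v n i t ω) ^ 2) := by
          rw [hCsum]
  -- Markov bound
  have hbound : ∀ n, 0 < N n → 0 < T n →
      P n {ω | ε < (N n : ℝ)⁻¹ * ∑ i ∈ Finset.range (N n),
          (μ0 (g0 n i) - μhat n ω (ghat n ω i)) ^ 2}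
        ≤ ENNReal.ofReal ((4 / ε) *
            (((N n : ℝ)⁻¹ * ∑ i ∈ Finset.range (N n), (σ n i) ^ 2) / (T n : ℝ))) := by
    intro n hNn hTn
    haveI := hP n
    have hTpos : (0:ℝ) < T n := by exact_mod_cast hTn
    set W : Ω n → ℝ := fun ω => (N n : ℝ)⁻¹ * ∑ i ∈ Finset.range (N n),
        (σ n i) ^ 2 * ((T n : ℝ)⁻¹ * ∑ t ∈ Finset.range (T n), v n i t ω) ^ 2 with hW
    have hWnonneg : ∀ ω, 0 ≤ W ω := by
      intro ω
      apply mul_nonneg (by positivity)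
      exact Finset.sum_nonneg fun i _ => mul_nonneg (sq_nonneg _) (sq_nonneg _)
    have hint2 : ∀ i t, Integrable (fun ω => (v n i t ω) ^ 2) (P n) := by
      intro i t
      by_contra h
      have := hvar n i t
      rw [integral_undef h] at this
      exact one_ne_zero this.symm
    have hmem : ∀ i, MemLp (fun ω => ∑ t ∈ Finset.range (T n), v n i t ω) 2 (P n) := by
      intro i
      have h := memLp_finsetSum' (Finset.range (T n)) (fun t _ =>
        (memLp_two_iff_integrable_sq (hvmeas n i t).aestronglyMeasurable).2 (hint2 i t))
      have heq : (∑ t ∈ Finset.range (T n), v n i t)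
          = fun ω => ∑ t ∈ Finset.range (T n), v n i t ω := by
        funext ω; simp
      rwa [heq] at h
    have hintS : ∀ i, Integrable
        (fun ω => (∑ t ∈ Finset.range (T n), v n i t ω) ^ 2) (P n) :=
      fun i => (hmem i).integrable_sq
    have hterm : ∀ i, (fun ω => (σ n i) ^ 2 *
          ((T n : ℝ)⁻¹ * ∑ t ∈ Finset.range (T n), v n i t ω) ^ 2)
        = fun ω => ((σ n i) ^ 2 * ((T n : ℝ)⁻¹) ^ 2) *
          (∑ t ∈ Finset.range (T n), v n i t ω) ^ 2 := by
      intro i; funext ω; ring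
    have hWint : Integrable W (P n) := by
      apply Integrable.const_mul
      apply integrable_finset_sum
      intro i _
      have := (hintS i).const_mul ((σ n i) ^ 2 * ((T n : ℝ)⁻¹) ^ 2)
      exact (hterm i) ▸ this
    have hEX : ∀ i, ∫ ω, (∑ t ∈ Finset.range (T n), v n i t ω) ^ 2 ∂(P n) = (T n : ℝ) :=
      fun i => sum_indep_sq_integral (P n) (v n i) (hvmeas n i) (hindep n i)
        (hmean n i) (hvar n i) (T n)
    have hEW : ∫ ω, W ω ∂(P n)
        = ((N n : ℝ)⁻¹ * ∑ i ∈ Finset.range (N n), (σ n i) ^ 2) / (T n : ℝ) := by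
      calc ∫ ω, W ω ∂(P n)
          = (N n : ℝ)⁻¹ * ∫ ω, ∑ i ∈ Finset.range (N n),
              (σ n i) ^ 2 * ((T n : ℝ)⁻¹ * ∑ t ∈ Finset.range (T n), v n i t ω) ^ 2
              ∂(P n) := integral_const_mul _ _
        _ = (N n : ℝ)⁻¹ * ∑ i ∈ Finset.range (N n), ∫ ω,
              (σ n i) ^ 2 * ((T n : ℝ)⁻¹ * ∑ t ∈ Finset.range (T n), v n i t ω) ^ 2
              ∂(P n) := by
            rw [integral_finset_sum]
            intro i _
            exact (hterm i) ▸ ((hintS i).const_mul _)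
        _ = (N n : ℝ)⁻¹ * ∑ i ∈ Finset.range (N n),
              ((σ n i) ^ 2 * ((T n : ℝ)⁻¹) ^ 2) * (T n : ℝ) := by
            congr 1
            refine Finset.sum_congr rfl fun i _ => ?_
            rw [hterm i, integral_const_mul, hEX i]
        _ = ((N n : ℝ)⁻¹ * ∑ i ∈ Finset.range (N n), (σ n i) ^ 2) / (T n : ℝ) := by
            have hpt : ∀ i ∈ Finset.range (N n),
                (σ n i) ^ 2 * ((T n : ℝ)⁻¹) ^ 2 * (T n : ℝ)
                  = (σ n i) ^ 2 * (T n : ℝ)⁻¹ := by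
              intro i _; field_simp
            rw [Finset.sum_congr rfl hpt, ← Finset.sum_mul, div_eq_mul_inv]
            ring
    have hM := mul_meas_ge_le_integral_of_nonneg (Eventually.of_forall hWnonneg) hWint (ε / 4)
    have hfin : P n {x | ε / 4 ≤ W x} ≠ ⊤ := measure_ne_top _ _
    have htr : (P n {x | ε / 4 ≤ W x}).toReal
        ≤ (4 / ε) * (((N n : ℝ)⁻¹ * ∑ i ∈ Finset.range (N n), (σ n i) ^ 2) / (T n : ℝ)) := by
      rw [hEW] at hM
      have h4 : (0:ℝ) < ε / 4 := by positivity
      have := (le_div_iff₀' h4).mpr hM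
      calc (P n {x | ε / 4 ≤ W x}).toReal
          ≤ (((N n : ℝ)⁻¹ * ∑ i ∈ Finset.range (N n), (σ n i) ^ 2) / (T n : ℝ)) / (ε / 4) :=
            this
        _ = (4 / ε) * (((N n : ℝ)⁻¹ * ∑ i ∈ Finset.range (N n), (σ n i) ^ 2) / (T n : ℝ)) := by
            rw [div_div_eq_mul_div]
            ring
    have hsub : {ω | ε < (N n : ℝ)⁻¹ * ∑ i ∈ Finset.range (N n),
        (μ0 (g0 n i) - μhat n ω (ghat n ω i)) ^ 2} ⊆ {x | ε / 4 ≤ W x} := by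
      intro ω hω
      simp only [Set.mem_setOf_eq] at hω ⊢
      have hk := key n hNn hTn ω
      have hWω : (N n : ℝ)⁻¹ * ∑ i ∈ Finset.range (N n),
          (μ0 (g0 n i) - μhat n ω (ghat n ω i)) ^ 2 ≤ 4 * W ω := hk
      linarith
    calc P n {ω | ε < (N n : ℝ)⁻¹ * ∑ i ∈ Finset.range (N n),
            (μ0 (g0 n i) - μhat n ω (ghat n ω i)) ^ 2}
        ≤ P n {x | ε / 4 ≤ W x} := measure_mono hsub
      _ = ENNReal.ofReal ((P n {x | ε / 4 ≤ W x}).toReal) :=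
          (ENNReal.ofReal_toReal hfin).symm
      _ ≤ ENNReal.ofReal ((4 / ε) *
            (((N n : ℝ)⁻¹ * ∑ i ∈ Finset.range (N n), (σ n i) ^ 2) / (T n : ℝ))) :=
          ENNReal.ofReal_le_ofReal htr
  -- assemble the limit
  have hNev : ∀ᶠ n in atTop, 0 < N n := by
    filter_upwards [hN.eventually_ge_atTop 1] with n hn
    exact_mod_cast lt_of_lt_of_le zero_lt_one (by exact_mod_cast hn : (1:ℕ) ≤ N n)
  have hTev : ∀ᶠ n in atTop, 0 < T n := by
    filter_upwards [hT.eventually_ge_atTop 1] with n hn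
    exact_mod_cast lt_of_lt_of_le zero_lt_one (by exact_mod_cast hn : (1:ℕ) ≤ T n)
  have hub : ∀ᶠ n in atTop,
      P n {ω | ε < (N n : ℝ)⁻¹ * ∑ i ∈ Finset.range (N n),
          (μ0 (g0 n i) - μhat n ω (ghat n ω i)) ^ 2}
        ≤ ENNReal.ofReal ((4 / ε) *
            (((N n : ℝ)⁻¹ * ∑ i ∈ Finset.range (N n), (σ n i) ^ 2) / (T n : ℝ))) := by
    filter_upwards [hNev, hTev] with n h1 h2
    exact hbound n h1 h2
  have hb0 : Tendsto (fun n => ENNReal.ofReal ((4 / ε) *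
      (((N n : ℝ)⁻¹ * ∑ i ∈ Finset.range (N n), (σ n i) ^ 2) / (T n : ℝ))))
      atTop (nhds 0) := by
    have h1 : Tendsto (fun n => (4 / ε) *
        (((N n : ℝ)⁻¹ * ∑ i ∈ Finset.range (N n), (σ n i) ^ 2) / (T n : ℝ)))
        atTop (nhds ((4 / ε) * 0)) := hA1ii.const_mul _
    rw [mul_zero] at h1
    have h2 := (ENNReal.continuous_ofReal.tendsto 0).comp h1
    rw [ENNReal.ofReal_zero] at h2
    exact h2
  exact tendsto_of_tendsto_of_tendsto_of_le_of_le' tendsto_const_nhds hb0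
    (Eventually.of_forall fun n => zero_le) hub
end
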